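/- Let G be a directed acyclic graph, let Z, V^∞ ⊆ V(G), and let (G', V'^∞) := torso(G, V^∞, Z) be the parity-preserving torso. Then for every pair of nodes u, v ∈ V(G) \ Z, there is a directed u→v path P in G if and only if there is a directed u→v path Q in G' of the same parity (odd/even length); moreover, Q can be chosen so that the nodes of P lying in V(G) \ Z coincide with the nodes of Q lying in V(G) \ Z, i.e., V(P) ∩ (V(G) \ Z) = V(Q) ∩ (V(G) \ Z). -/

import Mathlib

/-- A (simple) directed path in the directed graph `G`, represented as a nonempty
list of pairwise distinct vertices in which every consecutive pair is an edge of `G`. -/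
def IsPath {V : Type*} (G : V → V → Prop) (p : List V) : Prop :=
  p ≠ [] ∧ p.Chain' G ∧ p.Nodup

/-- `p` is a directed path from `u` to `v` in `G`. -/
def IsPathFrom {V : Type*} (G : V → V → Prop) (u v : V) (p : List V) : Prop :=
  IsPath G p ∧ p.head? = some u ∧ p.getLast? = some v

/-- The length (number of edges) of a path, given as its list of vertices. -/
def pathLen {V : Type*} (p : List V) : ℕ := p.length - 1

/-- The list of directed edges traversed by a path. -/
def edgesOf {V : Type*} (p : List V) : List (V × V) := p.zip p.tail

/-- A directed graph is acyclic (a DAG) if no vertex lies on a directed cycle. -/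
def Acyclic {V : Type*} (G : V → V → Prop) : Prop :=
  ∀ v, ¬ Relation.TransGen G v v

/-- The graph obtained from `G` by deleting the vertex set `M`. -/
def delV {V : Type*} (G : V → V → Prop) (M : Set V) : V → V → Prop :=
  fun a b => G a b ∧ a ∉ M ∧ b ∉ M

/-- All internal vertices of the path `p` (all vertices except the two endpoints)
lie in `Z`. -/
def internalsIn {V : Type*} (Z : Set V) (p : List V) : Prop :=
  ∀ x ∈ (p.drop 1).dropLast, x ∈ Z

/-- The parity-preserving torso of `G` with respect to `Z`.  Its vertices are
`Sum.inl v` for the original vertices `v ∈ V(G) \ Z`, together with new vertices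
`Sum.inr (u, v)` playing the role of `x_{uv}`.  For every `u, v ∉ Z` joined in `G`
by an odd path whose internal vertices all lie in `Z` there is an edge `u → v`
(this includes the edges of `G \ Z`, which are odd paths with no internal
vertices), and for every pair of distinct `u, v ∉ Z` joined in `G` by an even
path whose internal vertices all lie in `Z` there are edges `u → x_{uv} → v`. -/
def torsoGraph {V : Type*} (G : V → V → Prop) (Z : Set V) :
    V ⊕ V × V → V ⊕ V × V → Prop
  | Sum.inl u, Sum.inl v => u ∉ Z ∧ v ∉ Z ∧
      ∃ p, IsPathFrom G u v p ∧ Odd (pathLen p) ∧ internalsIn Z p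
  | Sum.inl u, Sum.inr w => w.1 = u ∧ u ∉ Z ∧ w.2 ∉ Z ∧ u ≠ w.2 ∧
      ∃ p, IsPathFrom G u w.2 p ∧ Even (pathLen p) ∧ internalsIn Z p
  | Sum.inr w, Sum.inl v => w.2 = v ∧ w.1 ∉ Z ∧ v ∉ Z ∧ w.1 ≠ v ∧
      ∃ p, IsPathFrom G w.1 v p ∧ Even (pathLen p) ∧ internalsIn Z p
  | Sum.inr _, Sum.inr _ => False

/-- The protected vertex set of the parity-preserving torso: the surviving old
protected vertices together with all the new vertices `x_{uv}`. -/
def torsoProtected {V : Type*} (Vinf Z : Set V) : Set (V ⊕ V × V) :=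
  Sum.inl '' (Vinf \ Z) ∪ Set.range Sum.inr


section TorsoHelpers

open List Relation

variable {V : Type*} {G : V → V → Prop} {Z : Set V}

lemma reflTransGen_of_chain'_head : ∀ (l : List V) (a : V), Chain' G (a :: l) →
    ∀ x ∈ a :: l, ReflTransGen G a x := by
  intro l
  induction l with
  | nil => intro a _ x hx; simp at hx; subst hx; exact .refl
  | cons b l ih =>
    intro a hc x hx
    rcases List.mem_cons.1 hx with rfl | hx
    · exact .refl
    · exact ReflTransGen.head (List.isChain_cons_cons.1 hc).1 (ih b (List.isChain_cons_cons.1 hc).2 x hx)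

lemma transGen_to_last : ∀ (l : List V) (w : V), Chain' G (l ++ [w]) → ∀ x ∈ l, TransGen G x w := by
  intro l
  induction l with
  | nil => simp
  | cons a l ih =>
    intro w hc x hx
    have hc' : Chain' G (a :: (l ++ [w])) := by simpa using hc
    rcases List.mem_cons.1 hx with rfl | hx
    · cases l with
      | nil => exact TransGen.single (List.isChain_cons_cons.1 hc').1
      | cons b l =>
        refine TransGen.head' (List.isChain_cons_cons.1 hc').1 ?_
        exact reflTransGen_of_chain'_head _ _ (List.isChain_cons_cons.1 hc').2 w (by simp)
    · exact ih w hc'.tail x hx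

lemma torso_mem_inl : ∀ (Q : List (V ⊕ V × V)), Chain' (torsoGraph G Z) Q →
    ∀ x : V, Sum.inl x ∈ Q → Q.head? = some (Sum.inl x) ∨ x ∉ Z := by
  intro Q
  induction Q with
  | nil => simp
  | cons a Q ih =>
    intro hc x hx
    rcases List.mem_cons.1 hx with rfl | hx
    · exact Or.inl rfl
    · rcases ih hc.tail x hx with h | h
      · right
        cases Q with
        | nil => simp at h
        | cons b Q' =>
          simp only [head?_cons, Option.some.injEq] at h
          subst h
          have he := (List.isChain_cons_cons.1 hc).1
          cases a with
          | inl u => exact he.2.1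
          | inr w => exact he.2.2.1
      · exact Or.inr h

lemma torso_mem_inr : ∀ (Q : List (V ⊕ V × V)), Chain' (torsoGraph G Z) Q →
    ∀ a b : V, Sum.inr (a, b) ∈ Q → Q.head? = some (Sum.inr (a, b)) ∨ Sum.inl a ∈ Q := by
  intro Q
  induction Q with
  | nil => simp
  | cons c Q ih =>
    intro hc a b hx
    rcases List.mem_cons.1 hx with rfl | hx
    · exact Or.inl rfl
    · rcases ih hc.tail a b hx with h | h
      · cases Q with
        | nil => simp at h
        | cons d Q' =>
          simp only [head?_cons, Option.some.injEq] at h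
          subst h
          have he := (List.isChain_cons_cons.1 hc).1
          cases c with
          | inl u => exact Or.inr (by rw [show a = u from he.1]; exact List.mem_cons_self)
          | inr w => exact absurd he id
      · exact Or.inr (List.mem_cons_of_mem _ h)

lemma dir1 : ∀ (n : ℕ) (P : List V) (u v : V), P.length ≤ n → u ∉ Z → v ∉ Z →
    IsPathFrom G u v P →
    ∃ Q, IsPathFrom (torsoGraph G Z) (Sum.inl u) (Sum.inl v) Q ∧
      (Odd (pathLen Q) ↔ Odd (pathLen P)) ∧
      {x : V | Sum.inl x ∈ Q} \ Z = {x : V | x ∈ P} \ Z := by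
  intro n
  induction n with
  | zero =>
    intro P u v hlen _ _ hP
    cases P with
    | nil => exact absurd rfl hP.1.1
    | cons a s => simp at hlen
  | succ n ih =>
    intro P u v hlen hu hv hP
    obtain ⟨⟨hne, hchain, hnodup⟩, hhead, hlast⟩ := hP
    cases P with
    | nil => exact absurd rfl hne
    | cons a s =>
    have hau : u = a := by simpa using hhead.symm
    subst a
    rcases eq_or_ne s [] with rfl | hsne
    · have huv : u = v := by simpa using hlast
      subst huv
      refine ⟨[Sum.inl u], ⟨⟨by simp, List.isChain_singleton _, by simp⟩, by simp, by simp⟩,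
        by simp [pathLen], ?_⟩
      ext x
      simp
    · classical
      set tk := s.takeWhile (fun x => decide (x ∈ Z)) with htkdef
      set t := s.dropWhile (fun x => decide (x ∈ Z)) with htdef
      have hst : tk ++ t = s := List.takeWhile_append_dropWhile
      have htkZ : ∀ x ∈ tk, x ∈ Z := fun x hx => by
        have := List.mem_takeWhile_imp hx; simpa using this
      have hgls := List.getLast?_eq_getLast hsne
      have hlast' : s.getLast? = some v := by
        rw [show u :: s = [u] ++ s from rfl, List.getLast?_append, hgls] at hlast
        simp only [Option.or] at hlast
        rw [hgls, hlast]
      have hvmem : v ∈ s := List.mem_of_mem_getLast? (by simp [hlast'])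
      have htne : t ≠ [] := by
        intro h
        have hseq : s = tk := by rw [← hst, h, List.append_nil]
        exact hv (htkZ v (hseq ▸ hvmem))
      set w := t.head htne with hwdef
      have hwt : w :: t.tail = t := List.cons_head_tail htne
      have hwZ : w ∉ Z := by
        have := List.head_dropWhile_not (fun x => decide (x ∈ Z)) htne
        simpa using this
      have hP2 : u :: s = (u :: (tk ++ [w])) ++ t.tail := by
        rw [← hst, ← hwt]; simp
      set p0 : List V := u :: (tk ++ [w]) with hp0def
      have hp0pre : p0 <+: u :: s := ⟨t.tail, hP2.symm⟩
      have hp0chain : Chain' G p0 := hchain.prefix hp0pre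
      have hp0nodup : p0.Nodup := List.Nodup.sublist hp0pre.sublist hnodup
      have hp0last : p0.getLast? = some w := by
        rw [show p0 = (u :: tk) ++ [w] by simp [hp0def]]
        exact List.getLast?_concat
      have hp0path : IsPathFrom G u w p0 := ⟨⟨by simp [hp0def], hp0chain, hp0nodup⟩,
        by simp [hp0def], hp0last⟩
      have hp0int : internalsIn Z p0 := by
        intro x hx
        have : x ∈ tk := by simpa [hp0def, List.dropLast_concat] using hx
        exact htkZ x this
      have hp0len : p0.length = tk.length + 2 := by simp [hp0def]
      have htsuf : t <:+ u :: s := ⟨u :: tk, by rw [← hst]; rfl⟩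
      have htchain := hchain.suffix htsuf
      have htnodup := List.Nodup.sublist htsuf.sublist hnodup
      have hthead : t.head? = some w := by rw [← hwt]; rfl
      have hglt := List.getLast?_eq_getLast htne
      have htlast : t.getLast? = some v := by
        rw [← hst, List.getLast?_append, hglt] at hlast'
        simp only [Option.or] at hlast'
        rw [hglt, hlast']
      have htpath : IsPathFrom G w v t := ⟨⟨htne, htchain, htnodup⟩, hthead, htlast⟩
      have hslen : s.length = tk.length + t.length := by rw [← hst]; simp
      have hlen' : t.length ≤ n := by
        simp only [List.length_cons, hslen] at hlen; omega
      obtain ⟨Q', hQ'path, hQ'par, hQ'set⟩ := ih t w v hlen' hwZ hv htpath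
      obtain ⟨⟨hQ'ne, hQ'chain, hQ'nodup⟩, hQ'head, hQ'last⟩ := hQ'path
      have huns : u ∉ s := (List.nodup_cons.1 hnodup).1
      have hunt : u ∉ t := fun h => huns ((List.IsSuffix.sublist ⟨tk, hst⟩).subset h)
      have hulQ' : Sum.inl u ∉ Q' := by
        intro h
        have h2 : u ∈ {x : V | Sum.inl x ∈ Q'} \ Z := ⟨h, hu⟩
        rw [hQ'set] at h2
        exact hunt h2.1
      have hQ'len : 1 ≤ Q'.length := List.length_pos_iff.2 hQ'ne
      have htlen : 1 ≤ t.length := List.length_pos_iff.2 htne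
      have hQ'parn : Q'.length % 2 = t.length % 2 := by
        rw [Nat.odd_iff, Nat.odd_iff, pathLen, pathLen] at hQ'par
        omega
      have hxmem : ∀ x : V, (x = u ∨ x ∈ s) ∧ x ∉ Z ↔ (x = u ∨ x ∈ t) ∧ x ∉ Z := by
        intro x
        constructor
        · rintro ⟨hm, hz⟩
          refine ⟨?_, hz⟩
          rcases hm with rfl | hm
          · exact Or.inl rfl
          · rw [← hst] at hm
            rcases List.mem_append.1 hm with hm | hm
            · exact absurd (htkZ x hm) hz
            · exact Or.inr hm
        · rintro ⟨hm, hz⟩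
          refine ⟨?_, hz⟩
          rcases hm with rfl | hm
          · exact Or.inl rfl
          · exact Or.inr ((List.IsSuffix.sublist ⟨tk, hst⟩).subset hm)
      have hQ'set' : ∀ x : V, (Sum.inl x ∈ Q' ∧ x ∉ Z) ↔ (x ∈ t ∧ x ∉ Z) := by
        intro x
        have := Set.ext_iff.1 hQ'set x
        simpa [Set.mem_diff] using this
      rcases Nat.even_or_odd tk.length with hev | hod
      · -- odd segment: direct edge inl u → inl w
        have hoddp0 : Odd (pathLen p0) := by
          rw [pathLen, hp0len, Nat.odd_iff]; rw [Nat.even_iff] at hev; omega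
        have hedge : torsoGraph G Z (Sum.inl u) (Sum.inl w) :=
          ⟨hu, hwZ, p0, hp0path, hoddp0, hp0int⟩
        refine ⟨Sum.inl u :: Q', ⟨⟨by simp, ?_, List.nodup_cons.2 ⟨hulQ', hQ'nodup⟩⟩,
          by simp, ?_⟩, ?_, ?_⟩
        · refine List.isChain_cons.2 ⟨?_, hQ'chain⟩
          intro y hy
          rw [hQ'head] at hy
          simp only [Option.mem_def, Option.some.injEq] at hy
          subst hy
          exact hedge
        · rw [show Sum.inl u :: Q' = [Sum.inl u] ++ Q' from rfl, List.getLast?_append,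
            hQ'last]
          rfl
        · rw [Nat.odd_iff, Nat.odd_iff]
          simp only [pathLen, List.length_cons, hslen]
          rw [Nat.even_iff] at hev
          omega
        · ext x
          simp only [Set.mem_diff, Set.mem_setOf_eq, List.mem_cons, Sum.inl.injEq]
          constructor
          · rintro ⟨h | h, hz⟩
            · subst h; exact (hxmem x).2 ⟨Or.inl rfl, hz⟩
            · have := (hQ'set' x).1 ⟨h, hz⟩
              exact (hxmem x).2 ⟨Or.inr this.1, hz⟩
          · rintro ⟨hm, hz⟩
            have := (hxmem x).1 ⟨hm, hz⟩
            rcases this.1 with rfl | hm'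
            · exact ⟨Or.inl rfl, hz⟩
            · exact ⟨Or.inr ((hQ'set' x).2 ⟨hm', hz⟩).1, hz⟩
      · -- even segment: via inr (u, w)
        have hevp0 : Even (pathLen p0) := by
          rw [pathLen, hp0len, Nat.even_iff]; rw [Nat.odd_iff] at hod; omega
        have huw : u ≠ w := by
          intro h
          exact (List.nodup_cons.1 hp0nodup).1 (by rw [h]; simp)
        have he1 : torsoGraph G Z (Sum.inl u) (Sum.inr (u, w)) :=
          ⟨rfl, hu, hwZ, huw, p0, hp0path, hevp0, hp0int⟩
        have he2 : torsoGraph G Z (Sum.inr (u, w)) (Sum.inl w) :=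
          ⟨rfl, hu, hwZ, huw, p0, hp0path, hevp0, hp0int⟩
        have hinr : Sum.inr (u, w) ∉ Q' := by
          intro h
          rcases torso_mem_inr Q' hQ'chain u w h with h' | h'
          · rw [hQ'head] at h'; simp at h'
          · exact hulQ' h'
        refine ⟨Sum.inl u :: Sum.inr (u, w) :: Q', ⟨⟨by simp, ?_, ?_⟩, by simp, ?_⟩, ?_, ?_⟩
        · refine List.isChain_cons_cons.2 ⟨he1, List.isChain_cons.2 ⟨?_, hQ'chain⟩⟩
          intro y hy
          rw [hQ'head] at hy
          simp only [Option.mem_def, Option.some.injEq] at hy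
          subst hy
          exact he2
        · refine List.nodup_cons.2 ⟨?_, List.nodup_cons.2 ⟨hinr, hQ'nodup⟩⟩
          simp only [List.mem_cons]
          rintro (h | h)
          · exact absurd h (by simp)
          · exact hulQ' h
        · rw [show Sum.inl u :: Sum.inr (u, w) :: Q' = [Sum.inl u, Sum.inr (u, w)] ++ Q'
            from rfl, List.getLast?_append, hQ'last]
          rfl
        · rw [Nat.odd_iff, Nat.odd_iff]
          simp only [pathLen, List.length_cons, hslen]
          rw [Nat.odd_iff] at hod
          omega
        · ext x
          simp only [Set.mem_diff, Set.mem_setOf_eq, List.mem_cons, Sum.inl.injEq,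
            reduceCtorEq, false_or]
          constructor
          · rintro ⟨h | h, hz⟩
            · subst h; exact (hxmem x).2 ⟨Or.inl rfl, hz⟩
            · have := (hQ'set' x).1 ⟨h, hz⟩
              exact (hxmem x).2 ⟨Or.inr this.1, hz⟩
          · rintro ⟨hm, hz⟩
            have := (hxmem x).1 ⟨hm, hz⟩
            rcases this.1 with rfl | hm'
            · exact ⟨Or.inl rfl, hz⟩
            · exact ⟨Or.inr ((hQ'set' x).2 ⟨hm', hz⟩).1, hz⟩

lemma glue (hG : Acyclic G) (u w v : V) (p P' : List V)
    (hp : IsPathFrom G u w p) (hint : internalsIn Z p) (hp2 : 2 ≤ p.length)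
    (hP' : IsPathFrom G w v P') (huP' : u ∉ P') :
    IsPathFrom G u v (p ++ P'.tail) ∧
      (p ++ P'.tail).length + 1 = p.length + P'.length ∧
      (∀ x, x ∈ p ++ P'.tail ↔ x ∈ p ∨ x ∈ P') ∧
      (∀ x ∈ p, x = u ∨ x = w ∨ x ∈ Z) := by
  obtain ⟨⟨hpne, hpchain, hpnodup⟩, hphead, hplast⟩ := hp
  obtain ⟨⟨hP'ne, hP'chain, hP'nodup⟩, hP'head, hP'last⟩ := hP'
  -- decompose p = u :: mid ++ [w]
  have hptail_ne : p.tail ≠ [] := by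
    cases p with
    | nil => simp at hp2
    | cons a q => cases q with
      | nil => simp at hp2
      | cons b q' => simp
  have hpcons : u :: p.tail = p := by
    cases p with
    | nil => exact absurd rfl hpne
    | cons a q => simp only [List.head?_cons, Option.some.injEq] at hphead; rw [hphead]; rfl
  set mid := p.tail.dropLast with hmid
  have hptl : p.tail.getLast hptail_ne = w := by
    have h1 : p.getLast? = some (p.tail.getLast hptail_ne) := by
      conv_lhs => rw [← hpcons]
      rw [List.getLast?_eq_getLast (l := u :: p.tail) (by simp), List.getLast_cons hptail_ne]
    rw [h1] at hplast
    simpa using hplast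
  have hpdecomp : p = u :: (mid ++ [w]) := by
    conv_lhs => rw [← hpcons]
    congr 1
    rw [hmid, ← hptl]
    exact (List.dropLast_append_getLast hptail_ne).symm
  have hmidZ : ∀ x ∈ mid, x ∈ Z := by
    intro x hx
    exact hint x (by simpa [List.drop_one] using hx)
  have hP'cons : w :: P'.tail = P' := by
    cases P' with
    | nil => exact absurd rfl hP'ne
    | cons a q => simp only [List.head?_cons, Option.some.injEq] at hP'head; rw [hP'head]; rfl
  -- disjointness
  have hdisj : ∀ x ∈ p, x ∉ P'.tail := by
    intro x hxp hxt
    have hxP' : x ∈ P' := by rw [← hP'cons]; exact List.mem_cons_of_mem _ hxt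
    have hxcases : x = u ∨ x ∈ mid ∨ x = w := by
      rw [hpdecomp] at hxp
      rcases List.mem_cons.1 hxp with rfl | hxp
      · exact Or.inl rfl
      · rcases List.mem_append.1 hxp with h | h
        · exact Or.inr (Or.inl h)
        · exact Or.inr (Or.inr (by simpa using h))
    rcases hxcases with rfl | hxm | rfl
    · exact huP' hxP'
    · have h1 : TransGen G x w := by
        apply transGen_to_last (u :: mid) w
        · rw [show (u :: mid) ++ [w] = u :: (mid ++ [w]) from rfl, ← hpdecomp]
          exact hpchain
        · exact List.mem_cons_of_mem _ hxm
      have h2 : ReflTransGen G w x := by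
        apply reflTransGen_of_chain'_head P'.tail w
        · rw [hP'cons]; exact hP'chain
        · rw [hP'cons]; exact hxP'
      exact hG x (TransGen.trans_left h1 h2)
    · have : x ∉ P'.tail := by
        intro h
        rw [← hP'cons] at hP'nodup
        exact (List.nodup_cons.1 hP'nodup).1 h
      exact this hxt
  refine ⟨⟨⟨by simp [hpne], ?_, ?_⟩, ?_, ?_⟩, ?_, ?_, ?_⟩
  · -- chain
    refine List.IsChain.append hpchain (by rw [← hP'cons] at hP'chain; exact hP'chain.tail) ?_
    intro x hx y hy
    rw [hplast] at hx
    simp only [Option.mem_def, Option.some.injEq] at hx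
    subst hx
    rw [← hP'cons] at hP'chain
    exact (List.isChain_cons.1 hP'chain).1 y hy
  · -- nodup
    rw [List.nodup_append]
    exact ⟨hpnodup, by rw [← hP'cons] at hP'nodup; exact (List.nodup_cons.1 hP'nodup).2,
      fun a ha b hb hab => hdisj a ha (hab ▸ hb)⟩
  · -- head
    rw [List.head?_append_of_ne_nil _ hpne]  -- may need different lemma name
    exact hphead
  · -- last
    cases htl : P'.tail with
    | nil =>
      have hwv : w = v := by
        rw [← hP'cons, htl] at hP'last
        simpa using hP'last
      rw [List.append_nil, hplast, hwv]
    | cons b q =>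
      rw [List.getLast?_append]
      rw [← hP'cons, htl, List.getLast?_cons_cons] at hP'last
      rw [hP'last]
      rfl
  · -- length
    have h3 : P'.length = P'.tail.length + 1 := by rw [← hP'cons]; simp
    rw [List.length_append]
    omega
  · -- membership
    intro x
    rw [List.mem_append, ← hP'cons, List.mem_cons]
    constructor
    · rintro (h | h)
      · exact Or.inl h
      · exact Or.inr (Or.inr h)
    · rintro (h | rfl | h)
      · exact Or.inl h
      · exact Or.inl (by rw [hpdecomp]; simp)
      · exact Or.inr h
  · -- classification
    intro x hx
    rw [hpdecomp] at hx
    rcases List.mem_cons.1 hx with rfl | hx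
    · exact Or.inl rfl
    · rcases List.mem_append.1 hx with h | h
      · exact Or.inr (Or.inr (hmidZ x h))
      · exact Or.inr (Or.inl (by simpa using h))

lemma dir2 (hG : Acyclic G) : ∀ (n : ℕ) (Q : List (V ⊕ V × V)) (u v : V), Q.length ≤ n →
    u ∉ Z → v ∉ Z → IsPathFrom (torsoGraph G Z) (Sum.inl u) (Sum.inl v) Q →
    ∃ P, IsPathFrom G u v P ∧ (Odd (pathLen P) ↔ Odd (pathLen Q)) ∧
      {x : V | x ∈ P} \ Z = {x : V | Sum.inl x ∈ Q} \ Z := by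
  intro n
  induction n with
  | zero =>
    intro Q u v hlen _ _ hQ
    cases Q with
    | nil => exact absurd rfl hQ.1.1
    | cons a R => simp at hlen
  | succ n ih =>
    intro Q u v hlen hu hv hQ
    obtain ⟨⟨hne, hchain, hnodup⟩, hhead, hlast⟩ := hQ
    cases Q with
    | nil => exact absurd rfl hne
    | cons a R =>
    have ha : Sum.inl u = a := by simpa using hhead.symm
    subst a
    cases R with
    | nil =>
      have huv : u = v := by simpa using hlast
      subst v
      exact ⟨[u], ⟨⟨by simp, List.isChain_singleton _, by simp⟩, by simp, by simp⟩, by simp [pathLen],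
        by ext x; simp⟩
    | cons r R' =>
    have hlast' : (r :: R').getLast? = some (Sum.inl v) := by
      rw [List.getLast?_cons_cons] at hlast; exact hlast
    have hedge1 := (List.isChain_cons_cons.1 hchain).1
    cases r with
    | inl w =>
      obtain ⟨-, hwZ, p, hp, hpodd, hpint⟩ := hedge1
      have hQ2 : IsPathFrom (torsoGraph G Z) (Sum.inl w) (Sum.inl v) (Sum.inl w :: R') :=
        ⟨⟨by simp, (List.isChain_cons_cons.1 hchain).2, (List.nodup_cons.1 hnodup).2⟩,
          by simp, hlast'⟩
      obtain ⟨P', hP', hP'par, hP'set⟩ :=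
        ih (Sum.inl w :: R') w v (by simp only [List.length_cons] at hlen ⊢; omega) hwZ hv hQ2
      have hunotR : Sum.inl u ∉ Sum.inl w :: R' := (List.nodup_cons.1 hnodup).1
      have hset := fun x => Set.ext_iff.1 hP'set x
      simp only [Set.mem_diff, Set.mem_setOf_eq] at hset
      have huP' : u ∉ P' := by
        intro h
        exact hunotR ((hset u).1 ⟨h, hu⟩).1
      have hp2 : 2 ≤ p.length := by
        have h1 : 1 ≤ pathLen p := hpodd.pos
        rw [pathLen] at h1; omega
      obtain ⟨hPP, hPlen, hPmem, hPclass⟩ := glue hG u w v p P' hp hpint hp2 hP' huP'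
      have hup : u ∈ p := List.mem_of_mem_head? (by simp [hp.2.1])
      refine ⟨p ++ P'.tail, hPP, ?_, ?_⟩
      · obtain ⟨⟨hP'ne, -, -⟩, -, -⟩ := hP'
        have l1 : 1 ≤ P'.length := List.length_pos_iff.2 hP'ne
        rw [Nat.odd_iff] at hpodd
        rw [Nat.odd_iff, Nat.odd_iff] at hP'par
        rw [Nat.odd_iff, Nat.odd_iff]
        simp only [pathLen, List.length_cons] at hpodd hP'par ⊢
        omega
      · ext x
        simp only [Set.mem_diff, Set.mem_setOf_eq]
        constructor
        · rintro ⟨hm, hz⟩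
          refine ⟨?_, hz⟩
          rw [hPmem] at hm
          rcases hm with hm | hm
          · rcases hPclass x hm with rfl | rfl | hZ
            · exact List.mem_cons_self
            · exact List.mem_cons_of_mem _ (List.mem_cons_self)
            · exact absurd hZ hz
          · exact List.mem_cons_of_mem _ ((hset x).1 ⟨hm, hz⟩).1
        · rintro ⟨hm, hz⟩
          refine ⟨?_, hz⟩
          rw [hPmem]
          rcases List.mem_cons.1 hm with h | hm
          · obtain rfl : x = u := by simpa using h
            exact Or.inl hup
          · exact Or.inr ((hset x).2 ⟨hm, hz⟩).1
    | inr c =>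
      obtain ⟨c1, c2⟩ := c
      obtain ⟨hc1, -, hdZ, hud, p, hp, hpev, hpint⟩ := hedge1
      simp only at hc1
      subst c1
      cases R' with
      | nil => simp at hlast'
      | cons r2 R'' =>
      have hedge2 := (List.isChain_cons_cons.1 (List.isChain_cons_cons.1 hchain).2).1
      cases r2 with
      | inr _ => exact absurd hedge2 id
      | inl w =>
      obtain ⟨hc2, -, -, -, -⟩ := hedge2
      simp only at hc2 hdZ hud hp
      subst c2
      -- now p : IsPathFrom G u w p, Even, internals; hud : u ≠ w; hdZ : w ∉ Z
      have hQ3 : IsPathFrom (torsoGraph G Z) (Sum.inl w) (Sum.inl v) (Sum.inl w :: R'') :=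
        ⟨⟨by simp, (List.isChain_cons_cons.1 (List.isChain_cons_cons.1 hchain).2).2,
          (List.nodup_cons.1 (List.nodup_cons.1 hnodup).2).2⟩, by simp,
          by rw [List.getLast?_cons_cons] at hlast'; exact hlast'⟩
      obtain ⟨P', hP', hP'par, hP'set⟩ :=
        ih (Sum.inl w :: R'') w v (by simp only [List.length_cons] at hlen ⊢; omega) hdZ hv hQ3
      have hunotR : Sum.inl u ∉ Sum.inl w :: R'' := by
        intro h
        exact (List.nodup_cons.1 hnodup).1 (List.mem_cons_of_mem _ h)
      have hset := fun x => Set.ext_iff.1 hP'set x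
      simp only [Set.mem_diff, Set.mem_setOf_eq] at hset
      have huP' : u ∉ P' := by
        intro h
        exact hunotR ((hset u).1 ⟨h, hu⟩).1
      have hp2 : 2 ≤ p.length := by
        rcases p with _ | ⟨x, _ | ⟨y, q⟩⟩
        · exact absurd rfl hp.1.1
        · exfalso
          apply hud
          have h1 := hp.2.1
          have h2 := hp.2.2
          simp only [List.head?_cons, List.getLast?_singleton, Option.some.injEq] at h1 h2
          rw [← h1, ← h2]
        · simp only [List.length_cons]; omega
      obtain ⟨hPP, hPlen, hPmem, hPclass⟩ := glue hG u w v p P' hp hpint hp2 hP' huP'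
      have hup : u ∈ p := List.mem_of_mem_head? (by simp [hp.2.1])
      refine ⟨p ++ P'.tail, hPP, ?_, ?_⟩
      · obtain ⟨⟨hP'ne, -, -⟩, -, -⟩ := hP'
        have l1 : 1 ≤ P'.length := List.length_pos_iff.2 hP'ne
        rw [Nat.even_iff] at hpev
        rw [Nat.odd_iff, Nat.odd_iff] at hP'par
        rw [Nat.odd_iff, Nat.odd_iff]
        simp only [pathLen, List.length_cons] at hpev hP'par ⊢
        omega
      · ext x
        simp only [Set.mem_diff, Set.mem_setOf_eq]
        constructor
        · rintro ⟨hm, hz⟩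
          refine ⟨?_, hz⟩
          rw [hPmem] at hm
          rcases hm with hm | hm
          · rcases hPclass x hm with rfl | rfl | hZ
            · exact List.mem_cons_self
            · exact List.mem_cons_of_mem _ (List.mem_cons_of_mem _ (List.mem_cons_self))
            · exact absurd hZ hz
          · exact List.mem_cons_of_mem _ (List.mem_cons_of_mem _ ((hset x).1 ⟨hm, hz⟩).1)
        · rintro ⟨hm, hz⟩
          refine ⟨?_, hz⟩
          rw [hPmem]
          rcases List.mem_cons.1 hm with h | hm
          · obtain rfl : x = u := by simpa using h
            exact Or.inl hup
          · rcases List.mem_cons.1 hm with h | hm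
            · exact absurd h (by simp)
            · exact Or.inr ((hset x).2 ⟨hm, hz⟩).1


end TorsoHelpers

/-- **Lemma (torso preserves paths and their parities).**
Let `G` be a DAG, `Z, Vinf ⊆ V(G)`, and let `(G', Vinf') = torso(G, Vinf, Z)`.
For all `u, v ∈ V(G) \ Z`: there is a `u → v` path `P` in `G` iff there is a
`u → v` path `Q` of the same parity in `G'`; moreover `Q` can be chosen so that
`V(P) ∩ (V(G) \ Z) = V(Q) ∩ (V(G) \ Z)` (and symmetrically for the converse). -/
theorem torso_preserves_paths {V : Type*} (G : V → V → Prop) (hG : Acyclic G)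
    (Vinf Z : Set V) (u v : V) (hu : u ∉ Z) (hv : v ∉ Z) :
    (∀ P, IsPathFrom G u v P →
      ∃ Q, IsPathFrom (torsoGraph G Z) (Sum.inl u) (Sum.inl v) Q ∧
        (Odd (pathLen Q) ↔ Odd (pathLen P)) ∧
        {x : V | Sum.inl x ∈ Q} \ Z = {x : V | x ∈ P} \ Z) ∧
    (∀ Q, IsPathFrom (torsoGraph G Z) (Sum.inl u) (Sum.inl v) Q →
      ∃ P, IsPathFrom G u v P ∧ (Odd (pathLen P) ↔ Odd (pathLen Q)) ∧
        {x : V | x ∈ P} \ Z = {x : V | Sum.inl x ∈ Q} \ Z) := by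
  exact ⟨fun P hP => dir1 P.length P u v le_rfl hu hv hP,
    fun Q hQ => dir2 hG Q.length Q u v le_rfl hu hv hQ⟩
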